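/- Two-sided norm bound for the perturbed Drazin inverse: let A, E, B, X, Y be n×n quaternion matrices with B = A + E. Assume X is a k-Drazin inverse of A, Y is an m-Drazin inverse of B, E = (A * X) * E * (A * X), ‖X * E‖₂ < 1, 1 + X * E is a unit of the matrix ring, and ‖(1 + X * E)⁻¹‖₂ ≤ 1 / (1 - ‖X * E‖₂). Then ‖X‖₂ / (1 + ‖X * E‖₂) ≤ ‖Y‖₂ and ‖Y‖₂ ≤ ‖X‖₂ / (1 - ‖X * E‖₂). -/

import Mathlib

noncomputable section

notation "ℍ" => Quaternion ℝ

/-- The bounded ℝ-linear map `x ↦ M.mulVec x` between `PiLp 2` spaces of quaternion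
vectors. -/
def mulVecCLM {m n : ℕ} (M : Matrix (Fin m) (Fin n) ℍ) :
    PiLp 2 (fun _ : Fin n => ℍ) →L[ℝ] PiLp 2 (fun _ : Fin m => ℍ) :=
  LinearMap.toContinuousLinearMap
    { toFun := fun x => WithLp.toLp 2 (M.mulVec x)
      map_add' := fun x y => by
        first
          | simp [Matrix.mulVec_add]
          | rw [WithLp.ofLp_add, Matrix.mulVec_add, WithLp.toLp_add]
      map_smul' := fun r x => by
        first
          | simp [Matrix.mulVec_smul]
          | rw [WithLp.ofLp_smul, Matrix.mulVec_smul, WithLp.toLp_smul]; rfl }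

/-- The spectral norm of a quaternion matrix: the operator norm of `x ↦ M.mulVec x`. -/
def specNorm {m n : ℕ} (M : Matrix (Fin m) (Fin n) ℍ) : ℝ := ‖mulVecCLM M‖

/-- `X` is a `k`-Drazin inverse of the square quaternion matrix `A`. -/
def IsDrazinInverse {n : ℕ} (A X : Matrix (Fin n) (Fin n) ℍ) (k : ℕ) : Prop :=
  A ^ k * X * A = A ^ k ∧ X * A * X = X ∧ A * X = X * A

section AuxRing

variable {R : Type*} [Ring R]

private lemma aux_pow_idem {p : R} (h : p * p = p) : ∀ j : ℕ, p ^ (j + 1) = p := by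
  intro j
  induction j with
  | zero => exact pow_one p
  | succ j ih => rw [pow_succ, ih, h]

private lemma aux_absorb {a p : R} (h : a * p = a) : ∀ j : ℕ, a * p ^ j = a := by
  intro j
  induction j with
  | zero => simp
  | succ j ih => rw [pow_succ, ← mul_assoc, ih, h]

/-- Uniqueness of the Drazin inverse (any indices) in a ring. -/
private lemma aux_drazin_unique {B S T : R} {s t : ℕ}
    (hS1 : B ^ s * S * B = B ^ s) (hS2 : S * B * S = S) (hS3 : B * S = S * B)
    (hT1 : B ^ t * T * B = B ^ t) (hT2 : T * B * T = T) (hT3 : B * T = T * B) :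
    S = T := by
  have cBS : Commute B S := hS3
  have cBT : Commute B T := hT3
  have hS2' : S * (B * S) = S := by rw [← mul_assoc]; exact hS2
  have hT2' : T * (B * T) = T := by rw [← mul_assoc]; exact hT2
  have hSB : (S * B) * (S * B) = S * B := by rw [← mul_assoc, hS2]
  have hBT : (B * T) * (B * T) = B * T := by
    rw [mul_assoc B T (B * T), ← mul_assoc T B T, hT2]
  have hBt : B ^ t = B ^ (t + 1) * T := by
    calc B ^ t = B ^ t * T * B := hT1.symm
      _ = B ^ t * (T * B) := by rw [mul_assoc]
      _ = B ^ t * (B * T) := by rw [← hT3]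
      _ = B ^ (t + 1) * T := by rw [← mul_assoc, ← pow_succ]
  have hBs : B ^ s = S * B ^ (s + 1) := by
    calc B ^ s = B ^ s * S * B := hS1.symm
      _ = S * B ^ s * B := by rw [(cBS.pow_left s).eq]
      _ = S * B ^ (s + 1) := by rw [mul_assoc, ← pow_succ]
  have eS : S = S * B * T := by
    calc S = S * (B * S) ^ t := (aux_absorb hS2' t).symm
      _ = S * (B ^ t * S ^ t) := by rw [cBS.mul_pow]
      _ = S * (S ^ t * B ^ t) := by rw [(cBS.pow_pow t t).eq]
      _ = S * S ^ t * B ^ t := by rw [← mul_assoc]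
      _ = S ^ (t + 1) * B ^ t := by rw [← pow_succ']
      _ = S ^ (t + 1) * (B ^ (t + 1) * T) := by rw [← hBt]
      _ = S ^ (t + 1) * B ^ (t + 1) * T := by rw [← mul_assoc]
      _ = (S * B) ^ (t + 1) * T := by rw [← cBS.symm.mul_pow]
      _ = S * B * T := by rw [aux_pow_idem hSB t]
  have eT : T = S * B * T := by
    calc T = T * (B * T) ^ s := (aux_absorb hT2' s).symm
      _ = T * (B ^ s * T ^ s) := by rw [cBT.mul_pow]
      _ = T * B ^ s * T ^ s := by rw [← mul_assoc]
      _ = B ^ s * T * T ^ s := by rw [← (cBT.pow_left s).eq]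
      _ = B ^ s * (T * T ^ s) := by rw [mul_assoc]
      _ = B ^ s * T ^ (s + 1) := by rw [← pow_succ']
      _ = S * B ^ (s + 1) * T ^ (s + 1) := by rw [hBs]
      _ = S * (B ^ (s + 1) * T ^ (s + 1)) := by rw [mul_assoc]
      _ = S * (B * T) ^ (s + 1) := by rw [← cBT.mul_pow]
      _ = S * (B * T) := by rw [aux_pow_idem hBT s]
      _ = S * B * T := by rw [← mul_assoc]
  exact eS.trans eT.symm

/-- `Ring.inverse (1 + X*E) * X` is a `k`-Drazin inverse of `A + E` when the
perturbation satisfies `E = A*X*E*(A*X)`. -/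
private lemma aux_drazin_pert {A E X : R} {k : ℕ}
    (h1 : A ^ k * X * A = A ^ k) (h2 : X * A * X = X) (h3 : A * X = X * A)
    (hE : E = A * X * E * (A * X)) (hU : IsUnit (1 + X * E)) :
    (A + E) ^ k * (Ring.inverse (1 + X * E) * X) * (A + E) = (A + E) ^ k ∧
    (Ring.inverse (1 + X * E) * X) * (A + E) * (Ring.inverse (1 + X * E) * X) =
      Ring.inverse (1 + X * E) * X ∧
    (A + E) * (Ring.inverse (1 + X * E) * X) = (Ring.inverse (1 + X * E) * X) * (A + E) := by
  set W := Ring.inverse (1 + X * E) with hWdef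
  have hUW : (1 + X * E) * W = 1 := Ring.mul_inverse_cancel _ hU
  have hWU : W * (1 + X * E) = 1 := Ring.inverse_mul_cancel _ hU
  have hPP : A * X * (A * X) = A * X := by
    rw [mul_assoc, ← mul_assoc X A X, h2]
  have hEl : A * X * E = E := by
    conv_lhs => rw [hE]
    calc A * X * (A * X * E * (A * X)) = (A * X * (A * X)) * (E * (A * X)) := by
          simp only [mul_assoc]
      _ = (A * X) * (E * (A * X)) := by rw [hPP]
      _ = A * X * E * (A * X) := by rw [← mul_assoc]
      _ = E := hE.symm
  have hEr : E * (A * X) = E := by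
    conv_lhs => rw [hE]
    calc A * X * E * (A * X) * (A * X) = (A * X * E) * ((A * X) * (A * X)) := by
          rw [mul_assoc (A * X * E) (A * X) (A * X)]
      _ = A * X * E * (A * X) := by rw [hPP]
      _ = E := hE.symm
  have hAU : A * (1 + X * E) = A + E := by rw [mul_add, mul_one, ← mul_assoc, hEl]
  have hBW : (A + E) * W = A := by rw [← hAU, mul_assoc, hUW, mul_one]
  have hBZ : (A + E) * (W * X) = A * X := by rw [← mul_assoc, hBW]
  have hUP : (1 + X * E) * (A * X) = A * X + X * E := by
    rw [add_mul, one_mul, mul_assoc X E (A * X), hEr]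
  have hq : A * X * (X * E) = X * E := by rw [h3, ← mul_assoc, h2]
  have hPU : (A * X) * (1 + X * E) = A * X + X * E := by rw [mul_add, mul_one, hq]
  have hUPc : (1 + X * E) * (A * X) = (A * X) * (1 + X * E) := hUP.trans hPU.symm
  have hWP : W * (A * X) = (A * X) * W := by
    calc W * (A * X) = W * (A * X) * ((1 + X * E) * W) := by rw [hUW, mul_one]
      _ = W * ((A * X) * (1 + X * E)) * W := by simp only [mul_assoc]
      _ = W * ((1 + X * E) * (A * X)) * W := by rw [← hUPc]
      _ = (W * (1 + X * E)) * ((A * X) * W) := by simp only [mul_assoc]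
      _ = (A * X) * W := by rw [hWU, one_mul]
  have hx : X * (A + E) = (1 + X * E) * (A * X) := by rw [mul_add, hUP, h3]
  have hZB : (W * X) * (A + E) = A * X := by
    calc (W * X) * (A + E) = W * (X * (A + E)) := mul_assoc _ _ _
      _ = W * ((1 + X * E) * (A * X)) := by rw [hx]
      _ = (W * (1 + X * E)) * (A * X) := (mul_assoc _ _ _).symm
      _ = A * X := by rw [hWU, one_mul]
  have hcomm : (A + E) * (W * X) = (W * X) * (A + E) := hBZ.trans hZB.symm
  have hPX : (A * X) * X = X := by rw [h3]; exact h2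
  have hZBZ : (W * X) * (A + E) * (W * X) = W * X := by
    rw [hZB]
    calc (A * X) * (W * X) = ((A * X) * W) * X := (mul_assoc _ _ _).symm
      _ = (W * (A * X)) * X := by rw [← hWP]
      _ = W * ((A * X) * X) := mul_assoc _ _ _
      _ = W * X := by rw [hPX]
  have hAP : A * (A * X) = (A * X) * A := by rw [mul_assoc, h3]
  have cAP : Commute A (A * X) := hAP
  have key : ∀ j : ℕ, (A + E) ^ j - (A + E) ^ j * (A * X) = A ^ j - A ^ j * (A * X) := by
    intro j
    induction j with
    | zero => simp
    | succ j ih =>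
      have hEAj : E * (A ^ j * (A * X)) = E * A ^ j := by
        rw [(cAP.pow_left j).eq, ← mul_assoc, hEr]
      have expand : (A + E) ^ (j + 1) - (A + E) ^ (j + 1) * (A * X) =
          (A + E) * ((A + E) ^ j - (A + E) ^ j * (A * X)) := by
        rw [pow_succ' (A + E) j, mul_sub, mul_assoc]
      have expandA : A * (A ^ j - A ^ j * (A * X)) =
          A ^ (j + 1) - A ^ (j + 1) * (A * X) := by
        rw [pow_succ' A j, mul_sub, mul_assoc]
      calc (A + E) ^ (j + 1) - (A + E) ^ (j + 1) * (A * X)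
          = (A + E) * ((A + E) ^ j - (A + E) ^ j * (A * X)) := expand
        _ = (A + E) * (A ^ j - A ^ j * (A * X)) := by rw [ih]
        _ = A * (A ^ j - A ^ j * (A * X)) + (E * A ^ j - E * (A ^ j * (A * X))) := by
            rw [add_mul, mul_sub E]
        _ = A * (A ^ j - A ^ j * (A * X)) := by rw [hEAj, sub_self, add_zero]
        _ = A ^ (j + 1) - A ^ (j + 1) * (A * X) := expandA
  have hAkP : A ^ k * (A * X) = A ^ k := by rw [h3, ← mul_assoc, h1]
  have hBkP : (A + E) ^ k * (A * X) = (A + E) ^ k := by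
    have hk := key k
    rw [hAkP, sub_self] at hk
    exact (sub_eq_zero.mp hk).symm
  refine ⟨?_, hZBZ, hcomm⟩
  rw [mul_assoc, hZB, hBkP]

end AuxRing

section AuxNorm

variable {n : ℕ}

private lemma aux_mulVecCLM_mul (M N : Matrix (Fin n) (Fin n) ℍ) :
    mulVecCLM (M * N) = (mulVecCLM M).comp (mulVecCLM N) :=
  ContinuousLinearMap.ext fun x => congrArg (WithLp.toLp 2) (Matrix.mulVec_mulVec x.ofLp M N).symm

private lemma aux_specNorm_nonneg (M : Matrix (Fin n) (Fin n) ℍ) : 0 ≤ specNorm M :=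
  norm_nonneg (mulVecCLM M)

private lemma aux_specNorm_mul_le (M N : Matrix (Fin n) (Fin n) ℍ) :
    specNorm (M * N) ≤ specNorm M * specNorm N := by
  show ‖mulVecCLM (M * N)‖ ≤ ‖mulVecCLM M‖ * ‖mulVecCLM N‖
  rw [aux_mulVecCLM_mul]
  exact ContinuousLinearMap.opNorm_comp_le _ _

private lemma aux_specNorm_add_le (M N : Matrix (Fin n) (Fin n) ℍ) :
    specNorm (M + N) ≤ specNorm M + specNorm N := by
  have h : mulVecCLM (M + N) = mulVecCLM M + mulVecCLM N :=
    ContinuousLinearMap.ext fun x =>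
      (congrArg (WithLp.toLp 2) (Matrix.add_mulVec M N x.ofLp)).trans (by rw [WithLp.toLp_add]; rfl)
  show ‖mulVecCLM (M + N)‖ ≤ ‖mulVecCLM M‖ + ‖mulVecCLM N‖
  rw [h]
  exact norm_add_le (mulVecCLM M) (mulVecCLM N)

private lemma aux_specNorm_one_le : specNorm (1 : Matrix (Fin n) (Fin n) ℍ) ≤ 1 := by
  have h : mulVecCLM (1 : Matrix (Fin n) (Fin n) ℍ) =
      ContinuousLinearMap.id ℝ (PiLp 2 (fun _ : Fin n => ℍ)) :=
    ContinuousLinearMap.ext fun x => congrArg (WithLp.toLp 2) (Matrix.one_mulVec x.ofLp)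
  show ‖mulVecCLM (1 : Matrix (Fin n) (Fin n) ℍ)‖ ≤ 1
  rw [h]
  exact ContinuousLinearMap.norm_id_le

end AuxNorm

/-- Two-sided norm bound for the perturbed Drazin inverse. -/
theorem drazin_perturbation_norm_bounds {n : ℕ}
    (A E B X Y : Matrix (Fin n) (Fin n) ℍ) (k m : ℕ)
    (hB : B = A + E)
    (hX : IsDrazinInverse A X k) (hY : IsDrazinInverse B Y m)
    (hE : E = (A * X) * E * (A * X))
    (hnorm : specNorm (X * E) < 1)
    (hU : IsUnit (1 + X * E))
    (hinv : specNorm (Ring.inverse (1 + X * E)) ≤ 1 / (1 - specNorm (X * E))) :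
    specNorm X / (1 + specNorm (X * E)) ≤ specNorm Y ∧
    specNorm Y ≤ specNorm X / (1 - specNorm (X * E)) := by
  obtain ⟨h1, h2, h3⟩ := hX
  subst hB
  obtain ⟨g1, g2, g3⟩ := hY
  obtain ⟨p1, p2, p3⟩ := aux_drazin_pert h1 h2 h3 hE hU
  have hYZ : Y = Ring.inverse (1 + X * E) * X :=
    aux_drazin_unique g1 g2 g3 p1 p2 p3
  have hXU : X = (1 + X * E) * Y := by
    rw [hYZ, ← mul_assoc, Ring.mul_inverse_cancel _ hU, one_mul]
  have ht0 : 0 ≤ specNorm (X * E) := aux_specNorm_nonneg _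
  have h1t : 0 < 1 - specNorm (X * E) := by linarith
  have h1t' : 0 < 1 + specNorm (X * E) := by linarith
  constructor
  · -- lower bound
    have hUle : specNorm (1 + X * E) ≤ 1 + specNorm (X * E) := by
      calc specNorm (1 + X * E) ≤ specNorm (1 : Matrix (Fin n) (Fin n) ℍ) + specNorm (X * E) :=
            aux_specNorm_add_le _ _
        _ ≤ 1 + specNorm (X * E) := by linarith [aux_specNorm_one_le (n := n)]
    have low : specNorm X ≤ (1 + specNorm (X * E)) * specNorm Y := by
      calc specNorm X = specNorm ((1 + X * E) * Y) := by conv_lhs => rw [hXU]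
        _ ≤ specNorm (1 + X * E) * specNorm Y := aux_specNorm_mul_le _ _
        _ ≤ (1 + specNorm (X * E)) * specNorm Y :=
            mul_le_mul_of_nonneg_right hUle (aux_specNorm_nonneg _)
    rw [div_le_iff₀ h1t']
    calc specNorm X ≤ (1 + specNorm (X * E)) * specNorm Y := low
      _ = specNorm Y * (1 + specNorm (X * E)) := mul_comm _ _
  · -- upper bound
    rw [hYZ]
    calc specNorm (Ring.inverse (1 + X * E) * X)
        ≤ specNorm (Ring.inverse (1 + X * E)) * specNorm X := aux_specNorm_mul_le _ _
      _ ≤ (1 / (1 - specNorm (X * E))) * specNorm X :=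
          mul_le_mul_of_nonneg_right hinv (aux_specNorm_nonneg _)
      _ = specNorm X / (1 - specNorm (X * E)) := one_div_mul_eq_div _ _
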